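/- Let $g_r \in \mathbb{Z}_2[w_2,w_3,w_4]$ be defined by $g_0=1$, $g_{-1}=g_{-2}=g_{-3}=0$, and $g_r = w_2 g_{r-2} + w_3 g_{r-3} + w_4 g_{r-4}$ for $r\geq 1$. Then $w_3 g_r^2 = g_{2r+3}$ for all $r\geq -3$. -/
import Mathlib


open MvPolynomial

/-- In `ℤ₂[w₂,w₃,w₄]` (with `X 0 = w₂`, `X 1 = w₃`, `X 2 = w₄`), with the
sequence `g_r` defined by `g₀ = 1`, `g_{-1} = g_{-2} = g_{-3} = 0` and
`g_r = w₂ g_{r-2} + w₃ g_{r-3} + w₄ g_{r-4}` for `r ≥ 1`, we have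
`w₃ g_r² = g_{2r+3}` for all `r ≥ -3`. -/
theorem stmt_4 (g : ℤ → MvPolynomial (Fin 3) (ZMod 2))
    (hneg : ∀ r : ℤ, -3 ≤ r → r < 0 → g r = 0)
    (h0 : g 0 = 1)
    (hrec : ∀ r : ℤ, 1 ≤ r →
      g r = X 0 * g (r - 2) + X 1 * g (r - 3) + X 2 * g (r - 4)) :
    ∀ (r : ℤ), -3 ≤ r →
      (X 1 : MvPolynomial (Fin 3) (ZMod 2)) * (g r) ^ 2 = g (2 * r + 3) := by
  have h2 : (2 : MvPolynomial (Fin 3) (ZMod 2)) = 0 := by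
    exact_mod_cast CharP.cast_eq_zero (MvPolynomial (Fin 3) (ZMod 2)) 2
  have hg1 : g 1 = 0 := by
    have h := hrec 1 (by norm_num)
    rw [show (1 - 2 : ℤ) = -1 by ring, show (1 - 3 : ℤ) = -2 by ring,
        show (1 - 4 : ℤ) = -3 by ring] at h
    rw [h, hneg (-1) (by norm_num) (by norm_num), hneg (-2) (by norm_num) (by norm_num),
        hneg (-3) (by norm_num) (by norm_num)]
    ring
  have key : ∀ n : ℕ, ∀ r : ℤ, -3 ≤ r → r + 3 ≤ (n : ℤ) →
      (X 1 : MvPolynomial (Fin 3) (ZMod 2)) * (g r) ^ 2 = g (2 * r + 3) := by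
    intro n
    induction n using Nat.strong_induction_on with
    | _ n ih =>
      intro r hr hrn
      rcases show r = -3 ∨ r = -2 ∨ r = -1 ∨ r = 0 ∨ 1 ≤ r by omega with
        h | h | h | h | h
      · subst h
        rw [show (2 * (-3) + 3 : ℤ) = -3 by ring, hneg (-3) (by norm_num) (by norm_num)]
        ring
      · subst h
        rw [hneg (-2) (by norm_num) (by norm_num),
            show (2 * (-2) + 3 : ℤ) = -1 by ring, hneg (-1) (by norm_num) (by norm_num)]
        ring
      · subst h
        rw [hneg (-1) (by norm_num) (by norm_num),
            show (2 * (-1) + 3 : ℤ) = 1 by ring, hg1]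
        ring
      · subst h
        rw [h0, show (2 * 0 + 3 : ℤ) = 3 by ring]
        have h3 := hrec 3 (by norm_num)
        rw [show (3 - 2 : ℤ) = 1 by ring, show (3 - 3 : ℤ) = 0 by ring,
            show (3 - 4 : ℤ) = -1 by ring, hg1, h0,
            hneg (-1) (by norm_num) (by norm_num)] at h3
        rw [h3]; ring
      · -- inductive step, r ≥ 1
        have e1 := hrec r h
        have e2 : g (2*r+3) = X 0 * g (2*r+1) + X 1 * g (2*r) + X 2 * g (2*r-1) := by
          have hh := hrec (2*r+3) (by omega)
          rw [show (2*r+3-2 : ℤ) = 2*r+1 by ring, show (2*r+3-3 : ℤ) = 2*r by ring,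
              show (2*r+3-4 : ℤ) = 2*r-1 by ring] at hh
          exact hh
        have e3 : g (2*r+1) = X 0 * g (2*r-1) + X 1 * g (2*r-2) + X 2 * g (2*r-3) := by
          have hh := hrec (2*r+1) (by omega)
          rw [show (2*r+1-2 : ℤ) = 2*r-1 by ring, show (2*r+1-3 : ℤ) = 2*r-2 by ring,
              show (2*r+1-4 : ℤ) = 2*r-3 by ring] at hh
          exact hh
        have e4 : g (2*r) = X 0 * g (2*r-2) + X 1 * g (2*r-3) + X 2 * g (2*r-4) := by
          have hh := hrec (2*r) (by omega)
          rw [show (2*r-2 : ℤ) = 2*r-2 by ring, show (2*r-3 : ℤ) = 2*r-3 by ring,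
              show (2*r-4 : ℤ) = 2*r-4 by ring] at hh
          exact hh
        have e5 : g (2*r-1) = X 0 * g (2*r-3) + X 1 * g (2*r-4) + X 2 * g (2*r-5) := by
          have hh := hrec (2*r-1) (by omega)
          rw [show (2*r-1-2 : ℤ) = 2*r-3 by ring, show (2*r-1-3 : ℤ) = 2*r-4 by ring,
              show (2*r-1-4 : ℤ) = 2*r-5 by ring] at hh
          exact hh
        have i1 : (X 1 : MvPolynomial (Fin 3) (ZMod 2)) * (g (r-2))^2 = g (2*r-1) := by
          have hh := ih (n-2) (by omega) (r-2) (by omega) (by omega)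
          rw [show (2*(r-2)+3 : ℤ) = 2*r-1 by ring] at hh
          exact hh
        have i2 : (X 1 : MvPolynomial (Fin 3) (ZMod 2)) * (g (r-3))^2 = g (2*r-3) := by
          have hh := ih (n-2) (by omega) (r-3) (by omega) (by omega)
          rw [show (2*(r-3)+3 : ℤ) = 2*r-3 by ring] at hh
          exact hh
        have i3 : (X 1 : MvPolynomial (Fin 3) (ZMod 2)) * (g (r-4))^2 = g (2*r-5) := by
          have hh := ih (n-2) (by omega) (r-4) (by omega) (by omega)
          rw [show (2*(r-4)+3 : ℤ) = 2*r-5 by ring] at hh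
          exact hh
        linear_combination
          (X 1 * (g r + (X 0 * g (r-2) + X 1 * g (r-3) + X 2 * g (r-4)))) * e1
          + X 0 ^ 2 * i1 + X 1 ^ 2 * i2 + X 2 ^ 2 * i3
          - e2 - X 0 * e3 - X 1 * e4 - X 2 * e5
          + (X 1 * (X 0 * X 1 * g (r-2) * g (r-3) + X 0 * X 2 * g (r-2) * g (r-4)
              + X 1 * X 2 * g (r-3) * g (r-4))
            - X 0 * X 1 * g (2*r-2) - X 0 * X 2 * g (2*r-3) - X 1 * X 2 * g (2*r-4)) * h2
  intro r hr
  exact key (r+3).toNat r hr (by omega)
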